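/- Let f : {0,1}^ℕ → ℝ be a continuous semi-open function and let B = {x ∈ {0,1}^ℕ : f⁻¹({f(x)}) = {x}}. If B is nowhere dense in {0,1}^ℕ, then f(B) is nowhere dense in ℝ. -/

import Mathlib

open Set Topology

noncomputable section

/-- A function on the Cantor space is semi-open if the image of every nonempty open set
has nonempty interior in `ℝ`. -/
def SemiOpen (f : (ℕ → Bool) → ℝ) : Prop :=
  ∀ V : Set (ℕ → Bool), IsOpen V → V.Nonempty → (interior (f '' V)).Nonempty

theorem image_uniq_nowhereDense (f : (ℕ → Bool) → ℝ)
    (hcont : Continuous f) (hso : SemiOpen f)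
    (B : Set (ℕ → Bool)) (hB : B = {x : ℕ → Bool | f ⁻¹' {f x} = {x}})
    (hnwd : IsNowhereDense B) :
    IsNowhereDense (f '' B) := by
  rw [IsNowhereDense, eq_empty_iff_forall_notMem]
  intro y hy
  set U : Set (ℕ → Bool) := (closure B)ᶜ with hUdef
  have hUopen : IsOpen U := isClosed_closure.isOpen_compl
  have hUdense : Dense U := interior_eq_empty_iff_dense_compl.mp hnwd
  -- f '' B and f '' U are disjoint
  have hdisj : ∀ z, z ∈ f '' U → z ∉ f '' B := by
    rintro z ⟨u, hu, rfl⟩ ⟨x, hx, hfx⟩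
    have hxB : f ⁻¹' {f x} = {x} := by rw [hB] at hx; exact hx
    have : u ∈ f ⁻¹' {f x} := by simp [hfx]
    rw [hxB] at this
    rw [mem_singleton_iff] at this
    subst this
    exact hu (subset_closure hx)
  -- closure (f '' B) ⊆ f '' univ
  have hcomp : IsCompact (f '' (univ : Set (ℕ → Bool))) := isCompact_univ.image hcont
  have hsub : closure (f '' B) ⊆ f '' univ :=
    closure_minimal (image_mono (f := f) (subset_univ B)) hcomp.isClosed
  -- y ∈ interior (closure (f '' B)); pull back
  have hyI : y ∈ interior (closure (f '' B)) := hy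
  obtain ⟨x, -, hfx⟩ := hsub (interior_subset hyI)
  set V : Set (ℕ → Bool) := f ⁻¹' interior (closure (f '' B)) with hVdef
  have hVopen : IsOpen V := isOpen_interior.preimage hcont
  have hVne : V.Nonempty := ⟨x, by simp [hVdef, hfx, hyI]⟩
  have hVUne : (V ∩ U).Nonempty := hUdense.inter_open_nonempty V hVopen hVne
  obtain ⟨z, hz⟩ := hso (V ∩ U) (hVopen.inter hUopen) hVUne
  -- z ∈ closure (f '' B), but its nbhd interior (f '' (V ∩ U)) misses f '' B
  have hzc : z ∈ closure (f '' B) := by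
    have : z ∈ f '' (V ∩ U) := interior_subset hz
    obtain ⟨w, hw, rfl⟩ := this
    exact interior_subset hw.1
  rw [mem_closure_iff] at hzc
  obtain ⟨t, ht⟩ := hzc (interior (f '' (V ∩ U))) isOpen_interior hz
  exact hdisj t (image_mono (f := f) inter_subset_right (interior_subset ht.1)) ht.2
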